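/- (Lemma 2.4, osp(2m+1|2)) For every λ ∈ 𝒫 with λ₀ ≥ m, the following identity holds in K: chM(λ) − chM(λ^δ) = (∏_{α∈Δ₁⁺}(e^{α/2} + e^{−α/2}) / ∏_{α∈Δ₀⁺}(e^{α/2} − e^{−α/2})) · Σ_{w∈W} det(w) e^{w(λ+ρ)}, where λ^δ = (2m−1−λ₀)δ + Σ_{i=1}^m λ_i ε_i. -/

import Mathlib

open Finset
open Fin.NatCast

/-- The standard basis vector `ε_i` of `ℚ^{1+m}` (with `ε_0 = δ`). -/
noncomputable def eps (m i : ℕ) : Fin (m+1) → ℚ := Pi.single (i : Fin (m+1)) 1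

/-- The bilinear form `⟨λ, μ⟩ = −λ₀μ₀ + Σ_{i=1}^m λ_i μ_i` on `ℚ^{1+m}`. -/
noncomputable def form (m : ℕ) (l μ : Fin (m+1) → ℚ) : ℚ :=
  -(l 0 * μ 0) + ∑ i : Fin (m+1), (if i = 0 then 0 else l i * μ i)

/-- `ρ` for `osp(2m|2)`: `ρ₀ = 1−m`, `ρ_i = m−i`. -/
noncomputable def rhoD (m : ℕ) : Fin (m+1) → ℚ :=
  fun i => if i = 0 then 1 - (m : ℚ) else (m : ℚ) - (i : ℕ)

/-- `ρ` for `osp(2m+1|2)`: `ρ₀ = 1/2−m`, `ρ_i = m−i+1/2`. -/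
noncomputable def rhoB (m : ℕ) : Fin (m+1) → ℚ :=
  fun i => if i = 0 then 1/2 - (m : ℚ) else (m : ℚ) - (i : ℕ) + 1/2

/-- All coordinates are integers. -/
def IsIntegralWt (m : ℕ) (l : Fin (m+1) → ℚ) : Prop := ∀ i, ∃ z : ℤ, l i = z

/-- Dominant integral weights for `osp(2m|2)`. -/
def PD (m : ℕ) (l : Fin (m+1) → ℚ) : Prop :=
  IsIntegralWt m l ∧ 0 ≤ l 0 ∧
  (∀ i j : ℕ, 1 ≤ i → i ≤ j → j ≤ m - 1 → l (j : Fin (m+1)) ≤ l (i : Fin (m+1))) ∧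
  |l (m : Fin (m+1))| ≤ l ((m - 1 : ℕ) : Fin (m+1)) ∧
  (∀ i : ℕ, 1 ≤ i → i ≤ m - 1 → 0 ≤ l (i : Fin (m+1))) ∧
  (∀ i : ℕ, 1 ≤ i → i ≤ m → l 0 < (i : ℚ) → l (i : Fin (m+1)) = 0)

/-- Dominant integral weights for `osp(2m+1|2)`. -/
def PB (m : ℕ) (l : Fin (m+1) → ℚ) : Prop :=
  IsIntegralWt m l ∧ 0 ≤ l 0 ∧
  (∀ i j : ℕ, 1 ≤ i → i ≤ j → j ≤ m → l (j : Fin (m+1)) ≤ l (i : Fin (m+1))) ∧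
  (∀ i : ℕ, 1 ≤ i → i ≤ m → 0 ≤ l (i : Fin (m+1))) ∧
  (∀ i : ℕ, 1 ≤ i → i ≤ m → l 0 < (i : ℚ) → l (i : Fin (m+1)) = 0)

/-- `λ` is atypical (w.r.t. a given `ρ`): `⟨λ+ρ, δ+s·ε_i⟩ = 0` for some `1 ≤ i ≤ m`, `s = ±1`. -/
def Atyp (m : ℕ) (ρ l : Fin (m+1) → ℚ) : Prop :=
  ∃ i : ℕ, 1 ≤ i ∧ i ≤ m ∧ ∃ s : ℚ, (s = 1 ∨ s = -1) ∧
    form m (l + ρ) (eps m 0 + s • eps m i) = 0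

abbrev GLQ (m : ℕ) := (Fin (m+1) → ℚ) ≃ₗ[ℚ] (Fin (m+1) → ℚ)

/-- Permutations of the coordinates `1, …, m` (fixing coordinate `0`). -/
def permSet (m : ℕ) : Set (GLQ m) :=
  {w | ∃ σ : Equiv.Perm (Fin (m+1)), σ 0 = 0 ∧ ∀ v, w v = v ∘ σ}

/-- The sign change of coordinate `0`. -/
def flip0Set (m : ℕ) : Set (GLQ m) :=
  {w | ∀ v k, w v k = if k = 0 then -(v k) else v k}

/-- Simultaneous sign changes of two coordinates among `1, …, m`. -/
def doubleFlipSet (m : ℕ) : Set (GLQ m) :=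
  {w | ∃ i j : Fin (m+1), i ≠ 0 ∧ j ≠ 0 ∧ i ≠ j ∧
    ∀ v k, w v k = if k = i ∨ k = j then -(v k) else v k}

/-- Sign changes of a single coordinate among `1, …, m`. -/
def singleFlipSet (m : ℕ) : Set (GLQ m) :=
  {w | ∃ i : Fin (m+1), i ≠ 0 ∧ ∀ v k, w v k = if k = i then -(v k) else v k}

/-- The Weyl group for `osp(2m|2)`. -/
def WD (m : ℕ) : Subgroup (GLQ m) :=
  Subgroup.closure (permSet m ∪ doubleFlipSet m ∪ flip0Set m)

/-- The Weyl group for `osp(2m+1|2)`. -/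
def WB (m : ℕ) : Subgroup (GLQ m) :=
  Subgroup.closure (permSet m ∪ singleFlipSet m ∪ flip0Set m)

/-- The block equivalence: the smallest equivalence relation with
`μ ∼ μ+α` for odd roots `α = ±(δ±ε_i)` with `⟨μ+ρ, α⟩ = 0`, and
`μ ∼ w(μ+ρ)−ρ` for `w ∈ W`. -/
def blockRel (m : ℕ) (ρ : Fin (m+1) → ℚ) (W : Subgroup (GLQ m)) :
    (Fin (m+1) → ℚ) → (Fin (m+1) → ℚ) → Prop :=
  Relation.EqvGen (fun μ ν =>
    (∃ i : ℕ, 1 ≤ i ∧ i ≤ m ∧ ∃ s t : ℚ, (s = 1 ∨ s = -1) ∧ (t = 1 ∨ t = -1) ∧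
      form m (μ + ρ) (t • (eps m 0 + s • eps m i)) = 0 ∧
      ν = μ + t • (eps m 0 + s • eps m i)) ∨
    (∃ w ∈ W, ν = w (μ + ρ) - ρ))

def blockD (m : ℕ) : (Fin (m+1) → ℚ) → (Fin (m+1) → ℚ) → Prop :=
  blockRel m (rhoD m) (WD m)

def blockB (m : ℕ) : (Fin (m+1) → ℚ) → (Fin (m+1) → ℚ) → Prop :=
  blockRel m (rhoB m) (WB m)

/-- The set `𝒫_λ = 𝒫_{λ+} ∪ 𝒫_{λ−}` for `osp(2m|2)`. -/
noncomputable def PlamD (m : ℕ) (l : Fin (m+1) → ℚ) : Set (Fin (m+1) → ℚ) :=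
  {μ | PD m μ ∧
    (μ = l + eps m 0 ∨ μ = l - eps m 0 ∨
     (∃ i : ℕ, 1 ≤ i ∧ i ≤ m - 1 ∧ (μ = l + eps m i ∨ μ = l - eps m i)) ∨
     (0 ≤ l (m : Fin (m+1)) ∧ μ = l + eps m m) ∨
     (l (m : Fin (m+1)) ≤ 0 ∧ μ = l - eps m m) ∨
     (l (m : Fin (m+1)) < 0 ∧ μ = l + eps m m) ∨
     (0 < l (m : Fin (m+1)) ∧ μ = l - eps m m))}

/-- The set `𝒫_λ = 𝒫_{λ+} ∪ 𝒫_{λ−}` for `osp(2m+1|2)`. -/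
noncomputable def PlamB (m : ℕ) (l : Fin (m+1) → ℚ) : Set (Fin (m+1) → ℚ) :=
  {μ | PB m μ ∧
    ((∃ i : ℕ, i ≤ m ∧ (μ = l + eps m i ∨ μ = l - eps m i)) ∨
     (l (m : Fin (m+1)) ≠ 0 ∧ μ = l))}

/-- The weight `λ^{j,q}`. -/
noncomputable def lamJQ (m : ℕ) (l : Fin (m+1) → ℚ) (l0 j : ℕ) (q : ℤ) : Fin (m+1) → ℚ :=
  ((j : ℚ) - (q : ℚ)) • eps m 0 + (∑ i ∈ Finset.Icc 1 j, l (i : Fin (m+1)) • eps m i) +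
    (q : ℚ) • eps m (j + 1) +
    ∑ i ∈ Finset.Icc (j+1) l0, (l (i : Fin (m+1)) + 1) • eps m (i+1)

/-- The weight `λ^{j,q}_−`. -/
noncomputable def lamJQm (m : ℕ) (l : Fin (m+1) → ℚ) (l0 j : ℕ) (q : ℤ) : Fin (m+1) → ℚ :=
  ((j : ℚ) - (q : ℚ)) • eps m 0 + (∑ i ∈ Finset.Icc 1 j, l (i : Fin (m+1)) • eps m i) +
    (q : ℚ) • eps m (j + 1) +
    (∑ i ∈ Finset.Icc (j+1) (l0 - 1), (l (i : Fin (m+1)) + 1) • eps m (i+1)) -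
    (l (l0 : Fin (m+1)) + 1) • eps m (l0 + 1)

/-- `λ^δ` for `osp(2m|2)`: coordinate `0` becomes `2m−2−λ₀`. -/
noncomputable def deltaD (m : ℕ) (l : Fin (m+1) → ℚ) : Fin (m+1) → ℚ :=
  fun i => if i = 0 then 2*(m : ℚ) - 2 - l 0 else l i

/-- `λ^δ` for `osp(2m+1|2)`: coordinate `0` becomes `2m−1−λ₀`. -/
noncomputable def deltaB (m : ℕ) (l : Fin (m+1) → ℚ) : Fin (m+1) → ℚ :=
  fun i => if i = 0 then 2*(m : ℚ) - 1 - l 0 else l i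

/-- The group algebra `A = ℤ[Γ]` (with `Γ ⊆ ℚ^{1+m}` the weight lattice). -/
abbrev Am (m : ℕ) : Type := AddMonoidAlgebra ℤ (Fin (m+1) → ℚ)

noncomputable instance (m : ℕ) : IsDomain (Am m) := NoZeroDivisors.to_isDomain _

/-- The fraction field `K` of `A`. -/
abbrev Km (m : ℕ) : Type := FractionRing (Am m)

/-- The element `e^μ ∈ K`. -/
noncomputable def ee (m : ℕ) (μ : Fin (m+1) → ℚ) : Km m :=
  algebraMap (Am m) (Km m) (AddMonoidAlgebra.single μ 1)

/-- The Weyl group `W_o` of `o(2m+1)` (fixing coordinate 0). -/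
def WoB (m : ℕ) : Subgroup (GLQ m) := Subgroup.closure (permSet m ∪ singleFlipSet m)

/-- `ρ_o` for `o(2m+1)`. -/
noncomputable def rhooB (m : ℕ) : Fin (m+1) → ℚ :=
  fun i => if i = 0 then 0 else (m : ℚ) - (i : ℕ) + 1/2

/-- The Weyl character `chL(μ)` of the irreducible `o(2m+1)`-module with highest
weight `μ`, as an element of `K`. -/
noncomputable def chLB (m : ℕ) (μ : Fin (m+1) → ℚ) : Km m :=
  (∑ᶠ w ∈ (WoB m : Set (GLQ m)),
      ((LinearMap.det (LinearEquiv.toLinearMap w) : ℚ) : Km m) *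
        ee m (w (μ + rhooB m) - rhooB m)) /
  ((∏ p ∈ Finset.filter (fun p : ℕ × ℕ => p.1 < p.2) (Finset.Icc 1 m ×ˢ Finset.Icc 1 m),
      ((1 - ee m (-(eps m p.1 - eps m p.2))) * (1 - ee m (-(eps m p.1 + eps m p.2))))) *
    ∏ i ∈ Finset.Icc 1 m, (1 - ee m (-(eps m i))))

/-- The character `chM(ν)` of the generalized Verma module for `osp(2m+1|2)`. -/
noncomputable def chMB (m : ℕ) (ν : Fin (m+1) → ℚ) : Km m :=
  (((∏ i ∈ Finset.Icc 1 m,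
      ((1 + ee m (-(eps m 0 - eps m i))) * (1 + ee m (-(eps m 0 + eps m i))))) *
      (1 + ee m (-(eps m 0)))) /
    (1 - ee m (-((2 : ℚ) • eps m 0)))) *
  ee m (ν 0 • eps m 0) * chLB m (ν - ν 0 • eps m 0)


section Aux

lemma ee_add (m : ℕ) (a b : Fin (m+1) → ℚ) : ee m (a + b) = ee m a * ee m b := by
  unfold ee
  rw [← map_mul, AddMonoidAlgebra.single_mul_single, one_mul]

lemma ee_zero (m : ℕ) : ee m 0 = 1 := by
  unfold ee
  rw [← AddMonoidAlgebra.one_def, map_one]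

lemma ee_ne_zero (m : ℕ) (a : Fin (m+1) → ℚ) : ee m a ≠ 0 := by
  unfold ee
  rw [map_ne_zero_iff _ (IsFractionRing.injective (Am m) (Km m))]
  exact fun h => one_ne_zero (AddMonoidAlgebra.single_eq_zero.mp h)

lemma ee_mul_neg (m : ℕ) (a : Fin (m+1) → ℚ) : ee m a * ee m (-a) = 1 := by
  rw [← ee_add, add_neg_cancel, ee_zero]

lemma ee_inj (m : ℕ) : Function.Injective (ee m) := by
  intro a b h
  unfold ee at h
  have := IsFractionRing.injective (Am m) (Km m) h
  exact (AddMonoidAlgebra.single_left_inj one_ne_zero).mp this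

lemma one_sub_ee_ne_zero (m : ℕ) {a : Fin (m+1) → ℚ} (h : a ≠ 0) : 1 - ee m a ≠ 0 := by
  rw [sub_ne_zero, ← ee_zero m]
  exact fun hh => h (ee_inj m hh.symm)

lemma ee_sum (m : ℕ) {ι : Type*} (s : Finset ι) (g : ι → Fin (m+1) → ℚ) :
    ee m (∑ i ∈ s, g i) = ∏ i ∈ s, ee m (g i) := by
  classical
  induction s using Finset.induction_on with
  | empty => simp [ee_zero]
  | insert a s hx ih => simp [Finset.sum_insert hx, Finset.prod_insert hx, ee_add, ih]

end Aux


section Aux2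

noncomputable def flipLin (m : ℕ) : (Fin (m+1) → ℚ) →ₗ[ℚ] (Fin (m+1) → ℚ) where
  toFun v := fun k => if k = 0 then -(v k) else v k
  map_add' a b := by funext k; by_cases h : k = 0 <;> simp [h] <;> ring
  map_smul' c a := by funext k; by_cases h : k = 0 <;> simp [h]

noncomputable def sigma0 (m : ℕ) : GLQ m :=
  LinearEquiv.ofLinear (flipLin m) (flipLin m)
    (LinearMap.ext fun v => funext fun k => by
      by_cases h : k = 0 <;> simp [flipLin, h])
    (LinearMap.ext fun v => funext fun k => by
      by_cases h : k = 0 <;> simp [flipLin, h])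

lemma sigma0_apply (m : ℕ) (v : Fin (m+1) → ℚ) (k : Fin (m+1)) :
    sigma0 m v k = if k = 0 then -(v k) else v k := rfl

lemma sigma0_mem_flip0Set (m : ℕ) : sigma0 m ∈ flip0Set m := fun _ _ => rfl

lemma flip0_eq_sigma0 (m : ℕ) {w : GLQ m} (hw : w ∈ flip0Set m) : w = sigma0 m :=
  LinearEquiv.ext fun v => funext fun k => by rw [hw v k, sigma0_apply]

lemma sigma0_sq (m : ℕ) : sigma0 m * sigma0 m = 1 :=
  LinearEquiv.ext fun v => funext fun k => by
    show sigma0 m (sigma0 m v) k = v k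
    by_cases h : k = 0 <;> simp [sigma0_apply, h]

lemma det_sigma0 (m : ℕ) : LinearMap.det (sigma0 m).toLinearMap = -1 := by
  rw [← LinearMap.det_toMatrix']
  have h : LinearMap.toMatrix' (sigma0 m).toLinearMap
      = Matrix.diagonal (fun i : Fin (m+1) => if i = 0 then (-1:ℚ) else 1) := by
    ext i j
    rw [LinearMap.toMatrix'_apply, Matrix.diagonal_apply]
    show sigma0 m _ i = _
    rw [sigma0_apply]
    by_cases hij : i = j <;> by_cases h0 : i = 0 <;> simp [hij, h0] <;>
      split_ifs <;> simp_all
  rw [h, Matrix.det_diagonal]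
  rw [show (fun i : Fin (m+1) => if i = 0 then (-1:ℚ) else 1)
      = fun i : Fin (m+1) => if i = 0 then (-1:ℚ) else 1 from rfl]
  simp [Finset.prod_ite_eq]

def Pgrp (m : ℕ) : Subgroup (GLQ m) where
  carrier := {w | (∀ v, w v 0 = v 0) ∧ w (eps m 0) = eps m 0}
  one_mem' := ⟨fun _ => rfl, rfl⟩
  mul_mem' := by
    rintro a b ⟨ha1, ha2⟩ ⟨hb1, hb2⟩
    refine ⟨fun v => ?_, ?_⟩
    · show a (b v) 0 = v 0
      rw [ha1, hb1]
    · show a (b (eps m 0)) = eps m 0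
      rw [hb2, ha2]
  inv_mem' := by
    rintro a ⟨ha1, ha2⟩
    have hinv : ∀ v, a (a⁻¹ v) = v := fun v => by
      have : (a * a⁻¹) v = v := by rw [mul_inv_cancel]; rfl
      exact this
    refine ⟨fun v => ?_, ?_⟩
    · conv_rhs => rw [← hinv v]
      rw [ha1]
    · have : a⁻¹ (a (eps m 0)) = eps m 0 := by
        have : (a⁻¹ * a) (eps m 0) = eps m 0 := by rw [inv_mul_cancel]; rfl
        exact this
      rw [ha2] at this
      exact this

lemma WoB_le_Pgrp (m : ℕ) : WoB m ≤ Pgrp m := by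
  rw [WoB, Subgroup.closure_le]
  rintro w (⟨σ, hσ0, hw⟩ | ⟨i, hi, hw⟩)
  · have hcond : ∀ k, (σ k = 0) = (k = 0) := fun k =>
      propext ⟨fun h => σ.injective (h.trans hσ0.symm), fun h => h ▸ hσ0⟩
    constructor
    · intro v; rw [hw]
      show v (σ 0) = v 0
      rw [hσ0]
    · rw [hw]; funext k
      show eps m 0 (σ k) = eps m 0 k
      unfold eps
      rw [Pi.single_apply, Pi.single_apply, Nat.cast_zero]
      simp only [hcond k]
  · constructor
    · intro v; rw [hw v 0, if_neg (fun h => hi h.symm)]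
    · funext k
      rw [hw (eps m 0) k]
      have he : eps m 0 i = 0 := by
        unfold eps; rw [Pi.single_apply, if_neg]; simpa using hi
      by_cases h : k = i
      · rw [if_pos h, h, he, neg_zero]
      · rw [if_neg h]

lemma sigma0_comm (m : ℕ) {w : GLQ m} (hw : w ∈ Pgrp m) :
    sigma0 m * w = w * sigma0 m := by
  obtain ⟨h1, h2⟩ := hw
  have hs : ∀ u : Fin (m+1) → ℚ, sigma0 m u = u - (2 * u 0) • eps m 0 := by
    intro u; funext k; rw [sigma0_apply]
    by_cases h : k = 0 <;> simp [h, eps, Pi.single_apply] <;> ring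
  refine LinearEquiv.ext fun v => ?_
  show sigma0 m (w v) = w (sigma0 m v)
  rw [hs (w v), h1, hs v, map_sub, map_smul, h2]

lemma sigma0_shift (m : ℕ) (c : ℚ) {z : Fin (m+1) → ℚ} (hz : z 0 = 0) :
    sigma0 m (c • eps m 0 + z) = (-c) • eps m 0 + z := by
  funext k
  rw [sigma0_apply]
  by_cases h : k = 0 <;> simp [h, eps, Pi.single_apply, hz]

end Aux2


section Aux3

lemma glq_inv_apply (m : ℕ) (w : GLQ m) (x : Fin (m+1) → ℚ) : w⁻¹ (w x) = x := by
  have : (w⁻¹ * w) x = x := by rw [inv_mul_cancel]; rfl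
  exact this

def EE (m : ℕ) : Set (Fin (m+1) → ℚ) :=
  (Set.range fun i : Fin (m+1) => Pi.single i (1:ℚ)) ∪
  (Set.range fun i : Fin (m+1) => -Pi.single i (1:ℚ))

lemma EE_finite (m : ℕ) : (EE m).Finite :=
  (Set.finite_range _).union (Set.finite_range _)

def stab (m : ℕ) : Subgroup (GLQ m) where
  carrier := {w | (∀ v ∈ EE m, w v ∈ EE m) ∧ (∀ v ∈ EE m, w⁻¹ v ∈ EE m)}
  one_mem' := ⟨fun _ hv => hv, fun v hv => by rw [inv_one]; exact hv⟩
  mul_mem' := by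
    rintro a b ⟨ha1, ha2⟩ ⟨hb1, hb2⟩
    refine ⟨fun v hv => ?_, fun v hv => ?_⟩
    · show a (b v) ∈ EE m
      exact ha1 _ (hb1 _ hv)
    · have h : (a*b)⁻¹ v = b⁻¹ (a⁻¹ v) := by rw [mul_inv_rev]; rfl
      rw [h]; exact hb2 _ (ha2 _ hv)
  inv_mem' := by
    rintro a ⟨ha1, ha2⟩
    exact ⟨ha2, fun v hv => by rw [inv_inv]; exact ha1 _ hv⟩

lemma gen_mem_stab (m : ℕ) : permSet m ∪ singleFlipSet m ⊆ (stab m : Set (GLQ m)) := by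
  rintro w (⟨σ, hσ0, hw⟩ | ⟨i, hi, hw⟩)
  · have h1 : ∀ i : Fin (m+1), w (Pi.single i 1) = Pi.single (σ.symm i) 1 := by
      intro i; rw [hw]; funext k
      show (Pi.single i 1 : Fin (m+1) → ℚ) (σ k) = (Pi.single (σ.symm i) 1 : Fin (m+1) → ℚ) k
      rw [Pi.single_apply, Pi.single_apply]
      simp only [Equiv.apply_eq_iff_eq_symm_apply σ]
    have h2 : ∀ i : Fin (m+1), w⁻¹ (Pi.single i 1) = Pi.single (σ i) 1 := by
      intro i
      have : w (Pi.single (σ i) 1) = Pi.single i 1 := by rw [h1, Equiv.symm_apply_apply]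
      rw [← this, glq_inv_apply]
    constructor
    · rintro v (⟨i, rfl⟩ | ⟨i, rfl⟩)
      · exact Or.inl ⟨σ.symm i, (h1 i).symm⟩
      · refine Or.inr ⟨σ.symm i, ?_⟩
        show -Pi.single (σ.symm i) (1:ℚ) = w (-Pi.single i 1)
        rw [map_neg, h1 i]
    · rintro v (⟨i, rfl⟩ | ⟨i, rfl⟩)
      · exact Or.inl ⟨σ i, (h2 i).symm⟩
      · refine Or.inr ⟨σ i, ?_⟩
        show -Pi.single (σ i) (1:ℚ) = w⁻¹ (-Pi.single i 1)
        rw [map_neg, h2 i]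
  · have hinv : w⁻¹ = w := by
      refine inv_eq_of_mul_eq_one_right ?_
      refine LinearEquiv.ext fun v => funext fun k => ?_
      show w (w v) k = v k
      rw [hw (w v) k, hw v k]
      by_cases h : k = i <;> simp [h]
    have h1 : ∀ j : Fin (m+1), w (Pi.single j 1) ∈ EE m := by
      intro j
      by_cases h : j = i
      · subst h
        refine Or.inr ⟨j, ?_⟩
        funext k
        rw [hw]
        by_cases hk : k = j <;> simp [hk, Pi.single_apply]
      · refine Or.inl ⟨j, ?_⟩
        funext k
        rw [hw]
        by_cases hk : k = i
        · have hz : (Pi.single j 1 : Fin (m+1) → ℚ) k = 0 := by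
            rw [Pi.single_apply, if_neg]; rw [hk]; exact fun hh => h hh.symm
          rw [if_pos hk, hz, neg_zero]; exact hz
        · simp [hk]
    have hmaps : ∀ v ∈ EE m, w v ∈ EE m := by
      rintro v (⟨j, rfl⟩ | ⟨j, rfl⟩)
      · exact h1 j
      · rcases h1 j with ⟨j', hj'⟩ | ⟨j', hj'⟩
        · exact Or.inr ⟨j', by rw [map_neg, ← hj']⟩
        · exact Or.inl ⟨j', by rw [map_neg, ← hj', neg_neg]⟩
    exact ⟨hmaps, by rw [hinv]; exact hmaps⟩

lemma WoB_le_stab (m : ℕ) : WoB m ≤ stab m := by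
  rw [WoB, Subgroup.closure_le]; exact gen_mem_stab m

lemma WoB_finite (m : ℕ) : (WoB m : Set (GLQ m)).Finite := by
  have hsingle : ∀ i : Fin (m+1), (fun j => if i = j then (1:ℚ) else 0) = Pi.single i 1 := by
    intro i; funext j; rw [Pi.single_apply]; simp [eq_comm]
  have hinj : Function.Injective (fun w : GLQ m => fun i => w (Pi.single i (1:ℚ))) := by
    intro a b hab
    refine LinearEquiv.ext fun v => ?_
    have ha := LinearMap.pi_apply_eq_sum_univ a.toLinearMap v
    have hb := LinearMap.pi_apply_eq_sum_univ b.toLinearMap v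
    simp only [hsingle] at ha hb
    show a.toLinearMap v = b.toLinearMap v
    rw [ha, hb]
    refine Finset.sum_congr rfl fun i _ => ?_
    have := congrFun hab i
    simp only at this
    show v i • a (Pi.single i 1) = v i • b (Pi.single i 1)
    rw [this]
  have hfin : (Set.univ.pi fun _ : Fin (m+1) => EE m).Finite :=
    Set.Finite.pi fun _ => EE_finite m
  have hsub : (WoB m : Set (GLQ m)) ⊆
      (fun w : GLQ m => fun i => w (Pi.single i (1:ℚ))) ⁻¹'
        (Set.univ.pi fun _ : Fin (m+1) => EE m) := by
    intro w hw
    intro i _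
    exact ((WoB_le_stab m) hw).1 _ (Or.inl ⟨i, rfl⟩)
  exact (hfin.preimage hinj.injOn).subset hsub

lemma WoB_le_WB (m : ℕ) : WoB m ≤ WB m := by
  rw [WoB, WB]
  exact Subgroup.closure_mono fun x hx => Or.inl hx

def WBalt (m : ℕ) : Subgroup (GLQ m) where
  carrier := (WoB m : Set (GLQ m)) ∪ (fun u => sigma0 m * u) '' (WoB m)
  one_mem' := Or.inl (WoB m).one_mem
  mul_mem' := by
    rintro a b (ha | ⟨u, hu, rfl⟩) (hb | ⟨v, hv, rfl⟩)
    · exact Or.inl (mul_mem ha hb)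
    · refine Or.inr ⟨a * v, mul_mem ha hv, ?_⟩
      show sigma0 m * (a * v) = a * (sigma0 m * v)
      rw [← mul_assoc, sigma0_comm m (WoB_le_Pgrp m ha), mul_assoc]
    · refine Or.inr ⟨u * b, mul_mem hu hb, ?_⟩
      show sigma0 m * (u * b) = (sigma0 m * u) * b
      rw [mul_assoc]
    · refine Or.inl ?_
      have key : (sigma0 m * u) * (sigma0 m * v) = (sigma0 m * sigma0 m) * (u * v) := by
        rw [mul_assoc (sigma0 m) u (sigma0 m * v), ← mul_assoc u (sigma0 m) v,
          ← sigma0_comm m (WoB_le_Pgrp m hu), ← mul_assoc, ← mul_assoc, mul_assoc]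
      show (sigma0 m * u) * (sigma0 m * v) ∈ WoB m
      rw [key, sigma0_sq, one_mul]
      exact mul_mem hu hv
  inv_mem' := by
    rintro a (ha | ⟨u, hu, rfl⟩)
    · exact Or.inl (inv_mem ha)
    · refine Or.inr ⟨u⁻¹, inv_mem hu, ?_⟩
      show sigma0 m * u⁻¹ = (sigma0 m * u)⁻¹
      rw [mul_inv_rev, inv_eq_of_mul_eq_one_right (sigma0_sq m),
        sigma0_comm m (WoB_le_Pgrp m (inv_mem hu))]

lemma WB_eq_alt (m : ℕ) : (WB m : Set (GLQ m)) =
    (WoB m : Set (GLQ m)) ∪ (fun u => sigma0 m * u) '' (WoB m) := by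
  apply Set.Subset.antisymm
  · have h : WB m ≤ WBalt m := by
      rw [WB, Subgroup.closure_le]
      rintro w ((hw | hw) | hw)
      · exact Or.inl (Subgroup.subset_closure (Or.inl hw))
      · exact Or.inl (Subgroup.subset_closure (Or.inr hw))
      · refine Or.inr ⟨1, one_mem _, ?_⟩
        show sigma0 m * 1 = w
        rw [mul_one, flip0_eq_sigma0 m hw]
    exact h
  · rintro w (hw | ⟨u, hu, rfl⟩)
    · exact WoB_le_WB m hw
    · exact mul_mem (Subgroup.subset_closure (Or.inr (sigma0_mem_flip0Set m)))
        (WoB_le_WB m hu)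

lemma WB_disj (m : ℕ) : Disjoint ((WoB m : Set (GLQ m)))
    ((fun u => sigma0 m * u) '' (WoB m)) := by
  rw [Set.disjoint_left]
  rintro w hw ⟨u, hu, rfl⟩
  have h1 : (sigma0 m * u) (eps m 0) = eps m 0 := ((WoB_le_Pgrp m) hw).2
  have h2 : (sigma0 m * u) (eps m 0) = sigma0 m (eps m 0) := by
    show sigma0 m (u (eps m 0)) = _
    rw [((WoB_le_Pgrp m) hu).2]
  have h3 := congrFun (h1.symm.trans h2) 0
  rw [sigma0_apply] at h3
  have h4 : eps m 0 0 = 1 := by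
    show (Pi.single ((0:ℕ):Fin (m+1)) 1 : Fin (m+1) → ℚ) 0 = 1
    rw [Nat.cast_zero, Pi.single_eq_same]
  rw [h4] at h3
  norm_num at h3

end Aux3


section Aux4

lemma eps_zero_apply (m : ℕ) (k : Fin (m+1)) : eps m 0 k = if k = 0 then 1 else 0 := by
  unfold eps; rw [Nat.cast_zero, Pi.single_apply]

lemma eps_apply' (m : ℕ) {i : ℕ} (hi : i ≤ m) (k : Fin (m+1)) :
    eps m i k = if (k : ℕ) = i then 1 else 0 := by
  unfold eps
  rw [Pi.single_apply]
  have hv : ((i : Fin (m+1)) : ℕ) = i := by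
    rw [Fin.val_natCast]; exact Nat.mod_eq_of_lt (Nat.lt_succ_of_le hi)
  have h : (k = (i : Fin (m+1))) = ((k:ℕ) = i) :=
    propext ⟨fun h => by rw [h]; exact hv, fun h => Fin.ext (by rw [hv]; exact h)⟩
  simp only [h]

lemma sum_smul_eps_apply (m : ℕ) (c : ℕ → ℚ) (k : Fin (m+1)) :
    (∑ i ∈ Finset.Icc 1 m, c i • eps m i) k = if k = 0 then 0 else c (k : ℕ) := by
  rw [Finset.sum_apply]
  by_cases hk : k = 0
  · rw [if_pos hk]
    refine Finset.sum_eq_zero fun i hi => ?_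
    rw [Finset.mem_Icc] at hi
    rw [Pi.smul_apply, eps_apply' m hi.2, hk]
    have : ((0 : Fin (m+1)) : ℕ) ≠ i := by
      show (0:ℕ) ≠ i; omega
    rw [if_neg this, smul_zero]
  · rw [if_neg hk]
    have hk0 : (k:ℕ) ≠ 0 := fun h => hk (Fin.ext (by rw [h]; rfl))
    have hk1 : 1 ≤ (k:ℕ) := Nat.one_le_iff_ne_zero.mpr hk0
    have hk2 : (k:ℕ) ≤ m := Nat.lt_succ_iff.mp k.isLt
    rw [Finset.sum_eq_single_of_mem (k:ℕ) (Finset.mem_Icc.mpr ⟨hk1, hk2⟩)]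
    · rw [Pi.smul_apply, eps_apply' m hk2, if_pos rfl, smul_eq_mul, mul_one]
    · intro b hb hbk
      rw [Finset.mem_Icc] at hb
      rw [Pi.smul_apply, eps_apply' m hb.2, if_neg (fun h => hbk h.symm), smul_zero]

lemma ee_pow (m : ℕ) (a : Fin (m+1) → ℚ) (n : ℕ) : ee m a ^ n = ee m ((n:ℚ) • a) := by
  induction n with
  | zero => rw [pow_zero, Nat.cast_zero, zero_smul, ee_zero]
  | succ n ih =>
    rw [pow_succ, ih, ← ee_add]
    congr 1
    push_cast
    module

lemma pairs_sum (m : ℕ) :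
    ∑ p ∈ Finset.filter (fun p : ℕ × ℕ => p.1 < p.2) (Finset.Icc 1 m ×ˢ Finset.Icc 1 m),
        eps m p.1
      = ∑ i ∈ Finset.Icc 1 m, ((m - i : ℕ) : ℚ) • eps m i := by
  rw [Finset.sum_filter, Finset.sum_product]
  refine Finset.sum_congr rfl fun i hi => ?_
  have h : ∀ j ∈ Finset.Icc 1 m,
      (if (i, j).1 < (i, j).2 then eps m (i, j).1 else 0) =
      (if i < j then eps m i else 0) := fun j _ => rfl
  rw [Finset.sum_congr rfl h, Finset.sum_ite, Finset.sum_const, Finset.sum_const_zero, add_zero]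
  have hf : Finset.filter (fun j => i < j) (Finset.Icc 1 m) = Finset.Icc (i+1) m := by
    ext j
    simp only [Finset.mem_filter, Finset.mem_Icc]
    omega
  rw [hf, Nat.card_Icc]
  rw [← Nat.cast_smul_eq_nsmul ℚ]
  congr 1
  push_cast
  norm_num

lemma half_sum (m : ℕ) :
    (∑ p ∈ Finset.filter (fun p : ℕ × ℕ => p.1 < p.2) (Finset.Icc 1 m ×ˢ Finset.Icc 1 m),
        eps m p.1)
      + ∑ i ∈ Finset.Icc 1 m, (1/2 : ℚ) • eps m i = rhooB m := by
  rw [pairs_sum]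
  rw [← Finset.sum_add_distrib]
  have h : ∀ i ∈ Finset.Icc 1 m,
      ((m - i : ℕ) : ℚ) • eps m i + (1/2 : ℚ) • eps m i
        = (((m - i : ℕ) : ℚ) + 1/2) • eps m i := fun i _ => (add_smul _ _ _).symm
  rw [Finset.sum_congr rfl h]
  funext k
  rw [sum_smul_eps_apply]
  unfold rhooB
  by_cases hk : k = 0
  · rw [if_pos hk, if_pos hk]
  · rw [if_neg hk, if_neg hk]
    have hk2 : (k:ℕ) ≤ m := Nat.lt_succ_iff.mp k.isLt
    rw [Nat.cast_sub hk2]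

lemma sum_e0 (m : ℕ) :
    ∑ i ∈ Finset.Icc 1 m,
        ((1/2 : ℚ) • (eps m 0 - eps m i) + (1/2 : ℚ) • (eps m 0 + eps m i))
      = (m : ℚ) • eps m 0 := by
  have h : ∀ i ∈ Finset.Icc 1 m,
      (1/2 : ℚ) • (eps m 0 - eps m i) + (1/2 : ℚ) • (eps m 0 + eps m i) = eps m 0 :=
    fun i _ => by module
  rw [Finset.sum_congr rfl h, Finset.sum_const, Nat.card_Icc, ← Nat.cast_smul_eq_nsmul ℚ]
  norm_num

lemma ee_plus_factor (m : ℕ) (a : Fin (m+1) → ℚ) :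
    ee m ((1/2:ℚ) • a) + ee m (-((1/2:ℚ) • a)) = ee m ((1/2:ℚ) • a) * (1 + ee m (-a)) := by
  have h : (1/2:ℚ) • a + -a = -((1/2:ℚ) • a) := by module
  rw [mul_add, mul_one, ← ee_add, h]

lemma ee_minus_factor (m : ℕ) (a : Fin (m+1) → ℚ) :
    ee m ((1/2:ℚ) • a) - ee m (-((1/2:ℚ) • a)) = ee m ((1/2:ℚ) • a) * (1 - ee m (-a)) := by
  have h : (1/2:ℚ) • a + -a = -((1/2:ℚ) • a) := by module
  rw [mul_sub, mul_one, ← ee_add, h]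

lemma ee_e0_factor (m : ℕ) :
    ee m (eps m 0) - ee m (-(eps m 0))
      = ee m (eps m 0) * (1 - ee m (-((2:ℚ) • eps m 0))) := by
  have h : eps m 0 + -((2:ℚ) • eps m 0) = -(eps m 0) := by module
  rw [mul_sub, mul_one, ← ee_add, h]

lemma det_sigma0_mul (m : ℕ) (u : GLQ m) :
    LinearMap.det (sigma0 m * u).toLinearMap = - LinearMap.det u.toLinearMap := by
  have h : (sigma0 m * u).toLinearMap = (sigma0 m).toLinearMap ∘ₗ u.toLinearMap := rfl
  rw [h, LinearMap.det_comp, det_sigma0]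
  ring

end Aux4


section Aux5

lemma vec_decomp (m : ℕ) (l : Fin (m+1) → ℚ) :
    l + rhoB m = (l 0 + 1/2 - (m:ℚ)) • eps m 0 + (l - l 0 • eps m 0 + rhooB m) := by
  funext k
  by_cases hk : k = 0 <;>
    simp only [Pi.add_apply, Pi.sub_apply, Pi.smul_apply, smul_eq_mul,
      eps_zero_apply, rhoB, rhooB, hk, if_pos, if_true, if_false] <;>
    simp [hk] <;> ring

lemma vec_delta (m : ℕ) (l : Fin (m+1) → ℚ) :
    deltaB m l - deltaB m l 0 • eps m 0 = l - l 0 • eps m 0 := by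
  funext k
  by_cases hk : k = 0 <;> simp [deltaB, eps_zero_apply, hk]

lemma deltaB_zero (m : ℕ) (l : Fin (m+1) → ℚ) :
    deltaB m l 0 = 2*(m:ℚ) - 1 - l 0 := by simp [deltaB]

lemma y_zero (m : ℕ) (l : Fin (m+1) → ℚ) :
    (l - l 0 • eps m 0 + rhooB m) 0 = 0 := by
  simp [rhooB, eps_zero_apply]

noncomputable def U2 (m : ℕ) : Km m := 1 - ee m (-((2:ℚ) • eps m 0))

noncomputable def QQ (m : ℕ) : Km m :=
  (∏ i ∈ Finset.Icc 1 m,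
      ((1 + ee m (-(eps m 0 - eps m i))) * (1 + ee m (-(eps m 0 + eps m i))))) *
    (1 + ee m (-(eps m 0)))

noncomputable def DenD (m : ℕ) : Km m :=
  (∏ p ∈ Finset.filter (fun p : ℕ × ℕ => p.1 < p.2) (Finset.Icc 1 m ×ˢ Finset.Icc 1 m),
      ((1 - ee m (-(eps m p.1 - eps m p.2))) * (1 - ee m (-(eps m p.1 + eps m p.2))))) *
    ∏ i ∈ Finset.Icc 1 m, (1 - ee m (-(eps m i)))

lemma chMB_eq (m : ℕ) (ν : Fin (m+1) → ℚ) :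
    chMB m ν = QQ m / U2 m * ee m (ν 0 • eps m 0) * chLB m (ν - ν 0 • eps m 0) := rfl

lemma chLB_eq (m : ℕ) (ν : Fin (m+1) → ℚ) :
    chLB m ν = ((∑ w ∈ (WoB_finite m).toFinset,
        ((LinearMap.det (LinearEquiv.toLinearMap w) : ℚ) : Km m) * ee m (w (ν + rhooB m))) *
      ee m (-(rhooB m))) / DenD m := by
  unfold chLB
  rw [finsum_mem_eq_finite_toFinset_sum _ (WoB_finite m)]
  congr 1
  rw [Finset.sum_mul]
  refine Finset.sum_congr rfl fun w _ => ?_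
  rw [sub_eq_add_neg, ee_add]
  ring

lemma fin_val_cast {m i : ℕ} (hi : i ≤ m) : ((i : Fin (m+1)) : ℕ) = i := by
  rw [Fin.val_natCast]; exact Nat.mod_eq_of_lt (Nat.lt_succ_of_le hi)

lemma U2_ne (m : ℕ) : U2 m ≠ 0 := by
  unfold U2
  apply one_sub_ee_ne_zero
  intro h
  have h0 := congrFun h 0
  rw [Pi.neg_apply, Pi.smul_apply, eps_zero_apply, Pi.zero_apply] at h0
  norm_num at h0

lemma DenD_ne (m : ℕ) : DenD m ≠ 0 := by
  unfold DenD
  apply mul_ne_zero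
  · rw [Finset.prod_ne_zero_iff]
    intro p hp
    rw [Finset.mem_filter, Finset.mem_product, Finset.mem_Icc, Finset.mem_Icc] at hp
    obtain ⟨⟨⟨h11, h12⟩, h21, h22⟩, hlt⟩ := hp
    apply mul_ne_zero
    · apply one_sub_ee_ne_zero
      rw [neg_ne_zero, sub_ne_zero]
      intro h
      have h0 := congrFun h ((p.1 : Fin (m+1)))
      rw [eps_apply' m h12, eps_apply' m h22, fin_val_cast h12, if_pos rfl,
        if_neg (by omega)] at h0
      norm_num at h0
    · apply one_sub_ee_ne_zero
      rw [neg_ne_zero]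
      intro h
      have h0 := congrFun h ((p.1 : Fin (m+1)))
      simp only [Pi.add_apply, Pi.zero_apply] at h0
      rw [eps_apply' m h12, eps_apply' m h22, fin_val_cast h12, if_pos rfl,
        if_neg (by omega)] at h0
      norm_num at h0
  · rw [Finset.prod_ne_zero_iff]
    intro i hi
    rw [Finset.mem_Icc] at hi
    apply one_sub_ee_ne_zero
    rw [neg_ne_zero]
    intro h
    have h0 := congrFun h ((i : Fin (m+1)))
    rw [eps_apply' m hi.2, fin_val_cast hi.2, if_pos rfl] at h0
    rw [Pi.zero_apply] at h0
    norm_num at h0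

lemma prod_plus (m : ℕ) :
    (∏ i ∈ Finset.Icc 1 m,
        ((ee m ((1/2 : ℚ) • (eps m 0 - eps m i)) +
            ee m (-((1/2 : ℚ) • (eps m 0 - eps m i)))) *
         (ee m ((1/2 : ℚ) • (eps m 0 + eps m i)) +
            ee m (-((1/2 : ℚ) • (eps m 0 + eps m i)))))) *
      (ee m ((1/2 : ℚ) • eps m 0) + ee m (-((1/2 : ℚ) • eps m 0)))
    = ee m (((m:ℚ) + 1/2) • eps m 0) * QQ m := by
  have h1 : ∀ i ∈ Finset.Icc 1 m,
      ((ee m ((1/2 : ℚ) • (eps m 0 - eps m i)) +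
          ee m (-((1/2 : ℚ) • (eps m 0 - eps m i)))) *
       (ee m ((1/2 : ℚ) • (eps m 0 + eps m i)) +
          ee m (-((1/2 : ℚ) • (eps m 0 + eps m i)))))
      = ee m ((1/2:ℚ) • (eps m 0 - eps m i) + (1/2:ℚ) • (eps m 0 + eps m i)) *
        ((1 + ee m (-(eps m 0 - eps m i))) * (1 + ee m (-(eps m 0 + eps m i)))) := by
    intro i _
    rw [ee_plus_factor, ee_plus_factor, ee_add]
    ring
  rw [Finset.prod_congr rfl h1, Finset.prod_mul_distrib, ← ee_sum, sum_e0, ee_plus_factor]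
  have h2 : ee m ((m:ℚ) • eps m 0) * ee m ((1/2:ℚ) • eps m 0)
      = ee m (((m:ℚ) + 1/2) • eps m 0) := by
    rw [← ee_add]; congr 1; module
  rw [← h2]
  unfold QQ
  ring

lemma prod_minus (m : ℕ) :
    (ee m (eps m 0) - ee m (-(eps m 0))) *
      (∏ p ∈ Finset.filter (fun p : ℕ × ℕ => p.1 < p.2)
          (Finset.Icc 1 m ×ˢ Finset.Icc 1 m),
        ((ee m ((1/2 : ℚ) • (eps m p.1 - eps m p.2)) -
            ee m (-((1/2 : ℚ) • (eps m p.1 - eps m p.2)))) *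
         (ee m ((1/2 : ℚ) • (eps m p.1 + eps m p.2)) -
            ee m (-((1/2 : ℚ) • (eps m p.1 + eps m p.2)))))) *
      ∏ i ∈ Finset.Icc 1 m,
        (ee m ((1/2 : ℚ) • eps m i) - ee m (-((1/2 : ℚ) • eps m i)))
    = (ee m (eps m 0) * ee m (rhooB m)) * (U2 m * DenD m) := by
  have h1 : ∀ p ∈ Finset.filter (fun p : ℕ × ℕ => p.1 < p.2)
      (Finset.Icc 1 m ×ˢ Finset.Icc 1 m),
      ((ee m ((1/2 : ℚ) • (eps m p.1 - eps m p.2)) -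
          ee m (-((1/2 : ℚ) • (eps m p.1 - eps m p.2)))) *
       (ee m ((1/2 : ℚ) • (eps m p.1 + eps m p.2)) -
          ee m (-((1/2 : ℚ) • (eps m p.1 + eps m p.2)))))
      = ee m (eps m p.1) *
        ((1 - ee m (-(eps m p.1 - eps m p.2))) * (1 - ee m (-(eps m p.1 + eps m p.2)))) := by
    intro p _
    have h : ee m ((1/2:ℚ) • (eps m p.1 - eps m p.2)) *
        ee m ((1/2:ℚ) • (eps m p.1 + eps m p.2)) = ee m (eps m p.1) := by
      rw [← ee_add]; congr 1; module
    rw [ee_minus_factor, ee_minus_factor, ← h]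
    ring
  have h2 : ∀ i ∈ Finset.Icc 1 m,
      ee m ((1/2 : ℚ) • eps m i) - ee m (-((1/2 : ℚ) • eps m i))
      = ee m ((1/2:ℚ) • eps m i) * (1 - ee m (-(eps m i))) :=
    fun i _ => ee_minus_factor m (eps m i)
  have hpairs : ∏ p ∈ Finset.filter (fun p : ℕ × ℕ => p.1 < p.2)
      (Finset.Icc 1 m ×ˢ Finset.Icc 1 m),
      ((ee m ((1/2 : ℚ) • (eps m p.1 - eps m p.2)) -
          ee m (-((1/2 : ℚ) • (eps m p.1 - eps m p.2)))) *
       (ee m ((1/2 : ℚ) • (eps m p.1 + eps m p.2)) -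
          ee m (-((1/2 : ℚ) • (eps m p.1 + eps m p.2)))))
      = (∏ p ∈ Finset.filter (fun p : ℕ × ℕ => p.1 < p.2)
          (Finset.Icc 1 m ×ˢ Finset.Icc 1 m), ee m (eps m p.1)) *
        ∏ p ∈ Finset.filter (fun p : ℕ × ℕ => p.1 < p.2)
          (Finset.Icc 1 m ×ˢ Finset.Icc 1 m),
          ((1 - ee m (-(eps m p.1 - eps m p.2))) * (1 - ee m (-(eps m p.1 + eps m p.2)))) := by
    rw [Finset.prod_congr rfl h1, Finset.prod_mul_distrib]
  have hsingles : ∏ i ∈ Finset.Icc 1 m,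
      (ee m ((1/2 : ℚ) • eps m i) - ee m (-((1/2 : ℚ) • eps m i)))
      = (∏ i ∈ Finset.Icc 1 m, ee m ((1/2:ℚ) • eps m i)) *
        ∏ i ∈ Finset.Icc 1 m, (1 - ee m (-(eps m i))) := by
    rw [Finset.prod_congr rfl h2, Finset.prod_mul_distrib]
  rw [hpairs, hsingles, ← ee_sum, ← ee_sum, ee_e0_factor]
  have h3 : ee m (∑ p ∈ Finset.filter (fun p : ℕ × ℕ => p.1 < p.2)
      (Finset.Icc 1 m ×ˢ Finset.Icc 1 m), eps m p.1) *
      ee m (∑ i ∈ Finset.Icc 1 m, (1/2:ℚ) • eps m i) = ee m (rhooB m) := by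
    rw [← ee_add, half_sum]
  rw [← h3]
  unfold U2 DenD
  ring

end Aux5


section Aux6

lemma sumWB (m : ℕ) (l : Fin (m+1) → ℚ) :
    (∑ᶠ w ∈ (WB m : Set (GLQ m)),
      ((LinearMap.det (LinearEquiv.toLinearMap w) : ℚ) : Km m) * ee m (w (l + rhoB m)))
    = (ee m ((l 0 + 1/2 - (m:ℚ)) • eps m 0) - ee m (-((l 0 + 1/2 - (m:ℚ)) • eps m 0))) *
      ∑ w ∈ (WoB_finite m).toFinset,
        ((LinearMap.det (LinearEquiv.toLinearMap w) : ℚ) : Km m) *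
          ee m (w (l - l 0 • eps m 0 + rhooB m)) := by
  classical
  have hyz : (l - l 0 • eps m 0 + rhooB m) 0 = 0 := y_zero m l
  have hdecomp := vec_decomp m l
  have hset : (WB m : Set (GLQ m)) =
      ↑((WoB_finite m).toFinset ∪ (WoB_finite m).toFinset.image (fun u => sigma0 m * u)) := by
    rw [Finset.coe_union, Finset.coe_image, Set.Finite.coe_toFinset]
    exact WB_eq_alt m
  rw [hset, finsum_mem_coe_finset]
  have hdisj : Disjoint (WoB_finite m).toFinset
      ((WoB_finite m).toFinset.image (fun u => sigma0 m * u)) := by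
    rw [← Finset.disjoint_coe, Finset.coe_image, Set.Finite.coe_toFinset]
    exact WB_disj m
  rw [Finset.sum_union hdisj]
  have hterm1 : ∀ w ∈ (WoB_finite m).toFinset,
      ((LinearMap.det (LinearEquiv.toLinearMap w) : ℚ) : Km m) * ee m (w (l + rhoB m))
      = ee m ((l 0 + 1/2 - (m:ℚ)) • eps m 0) *
        (((LinearMap.det (LinearEquiv.toLinearMap w) : ℚ) : Km m) *
          ee m (w (l - l 0 • eps m 0 + rhooB m))) := by
    intro w hw
    have hwP := WoB_le_Pgrp m ((WoB_finite m).mem_toFinset.mp hw)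
    rw [hdecomp, map_add, map_smul, hwP.2, ee_add]
    ring
  have hterm2 : ∀ u ∈ (WoB_finite m).toFinset,
      ((LinearMap.det (LinearEquiv.toLinearMap (sigma0 m * u)) : ℚ) : Km m) *
          ee m ((sigma0 m * u) (l + rhoB m))
      = -(ee m (-((l 0 + 1/2 - (m:ℚ)) • eps m 0)) *
          (((LinearMap.det (LinearEquiv.toLinearMap u) : ℚ) : Km m) *
            ee m (u (l - l 0 • eps m 0 + rhooB m)))) := by
    intro u hu
    have huP := WoB_le_Pgrp m ((WoB_finite m).mem_toFinset.mp hu)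
    have happ : (sigma0 m * u) (l + rhoB m)
        = -((l 0 + 1/2 - (m:ℚ)) • eps m 0) + u (l - l 0 • eps m 0 + rhooB m) := by
      show sigma0 m (u (l + rhoB m)) = _
      rw [hdecomp, map_add, map_smul, huP.2,
        sigma0_shift m _ (by rw [huP.1]; exact hyz), neg_smul]
    rw [happ, ee_add, det_sigma0_mul m u]
    push_cast
    ring
  have hAsum := Finset.sum_congr rfl hterm1
  have hBsum : (∑ w ∈ (WoB_finite m).toFinset.image (fun u => sigma0 m * u),
      ((LinearMap.det (LinearEquiv.toLinearMap w) : ℚ) : Km m) * ee m (w (l + rhoB m)))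
      = ∑ u ∈ (WoB_finite m).toFinset,
        -(ee m (-((l 0 + 1/2 - (m:ℚ)) • eps m 0)) *
          (((LinearMap.det (LinearEquiv.toLinearMap u) : ℚ) : Km m) *
            ee m (u (l - l 0 • eps m 0 + rhooB m)))) :=
    (Finset.sum_image (fun x _ y _ h => mul_left_cancel h)).trans
      (Finset.sum_congr rfl hterm2)
  rw [hAsum, hBsum, Finset.sum_neg_distrib, ← Finset.mul_sum, ← Finset.mul_sum]
  ring

end Aux6

/-- Lemma 2.4 for `osp(2m+1|2)`: for `λ ∈ 𝒫` with `λ₀ ≥ m`,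
`chM(λ) − chM(λ^δ) = (∏_{α∈Δ₁⁺}(e^{α/2}+e^{−α/2}) / ∏_{α∈Δ₀⁺}(e^{α/2}−e^{−α/2}))
· Σ_{w∈W} det(w) e^{w(λ+ρ)}`. -/
theorem lemma24_B (m : ℕ) (hm : 1 ≤ m) (l : Fin (m+1) → ℚ)
    (hP : PB m l) (h0 : (m : ℚ) ≤ l 0) :
    chMB m l - chMB m (deltaB m l) =
      (((∏ i ∈ Finset.Icc 1 m,
          ((ee m ((1/2 : ℚ) • (eps m 0 - eps m i)) +
              ee m (-((1/2 : ℚ) • (eps m 0 - eps m i)))) *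
           (ee m ((1/2 : ℚ) • (eps m 0 + eps m i)) +
              ee m (-((1/2 : ℚ) • (eps m 0 + eps m i)))))) *
          (ee m ((1/2 : ℚ) • eps m 0) + ee m (-((1/2 : ℚ) • eps m 0)))) /
        ((ee m (eps m 0) - ee m (-(eps m 0))) *
          (∏ p ∈ Finset.filter (fun p : ℕ × ℕ => p.1 < p.2)
              (Finset.Icc 1 m ×ˢ Finset.Icc 1 m),
            ((ee m ((1/2 : ℚ) • (eps m p.1 - eps m p.2)) -
                ee m (-((1/2 : ℚ) • (eps m p.1 - eps m p.2)))) *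
             (ee m ((1/2 : ℚ) • (eps m p.1 + eps m p.2)) -
                ee m (-((1/2 : ℚ) • (eps m p.1 + eps m p.2)))))) *
          ∏ i ∈ Finset.Icc 1 m,
            (ee m ((1/2 : ℚ) • eps m i) - ee m (-((1/2 : ℚ) • eps m i))))) *
      ∑ᶠ w ∈ (WB m : Set (GLQ m)),
        ((LinearMap.det (LinearEquiv.toLinearMap w) : ℚ) : Km m) *
          ee m (w (l + rhoB m)) := by
  classical
  rw [chMB_eq m l, chMB_eq m (deltaB m l), vec_delta m l, deltaB_zero m l,
    chLB_eq m (l - l 0 • eps m 0), sumWB m l, prod_plus m, prod_minus m]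
  set S : Km m := ∑ w ∈ (WoB_finite m).toFinset,
      ((LinearMap.det (LinearEquiv.toLinearMap w) : ℚ) : Km m) *
        ee m (w (l - l 0 • eps m 0 + rhooB m)) with hS
  have hu2 := U2_ne m
  have hD := DenD_ne m
  have hud : U2 m * DenD m ≠ 0 := mul_ne_zero hu2 hD
  have hGud : ee m (eps m 0) * ee m (rhooB m) * (U2 m * DenD m) ≠ 0 :=
    mul_ne_zero (mul_ne_zero (ee_ne_zero _ _) (ee_ne_zero _ _)) hud
  have key : (ee m (l 0 • eps m 0) - ee m ((2*(m:ℚ) - 1 - l 0) • eps m 0)) *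
      ee m (-(rhooB m)) * (ee m (eps m 0) * ee m (rhooB m))
      = ee m (((m:ℚ) + 1/2) • eps m 0) *
        (ee m ((l 0 + 1/2 - (m:ℚ)) • eps m 0) -
          ee m (-((l 0 + 1/2 - (m:ℚ)) • eps m 0))) := by
    have h1 : ee m (-(rhooB m)) * ee m (rhooB m) = 1 := by
      rw [← ee_add, neg_add_cancel, ee_zero]
    have h2 : ee m (l 0 • eps m 0) * ee m (eps m 0)
        = ee m (((m:ℚ)+1/2) • eps m 0) * ee m ((l 0 + 1/2 - (m:ℚ)) • eps m 0) := by
      rw [← ee_add, ← ee_add]; congr 1; module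
    have h3 : ee m ((2*(m:ℚ) - 1 - l 0) • eps m 0) * ee m (eps m 0)
        = ee m (((m:ℚ)+1/2) • eps m 0) *
          ee m (-((l 0 + 1/2 - (m:ℚ)) • eps m 0)) := by
      rw [← ee_add, ← ee_add]; congr 1; module
    linear_combination (ee m (-(rhooB m)) * ee m (rhooB m)) * h2
      - (ee m (-(rhooB m)) * ee m (rhooB m)) * h3
      + (ee m (((m:ℚ)+1/2) • eps m 0) * ee m ((l 0 + 1/2 - (m:ℚ)) • eps m 0)
         - ee m (((m:ℚ)+1/2) • eps m 0) *
            ee m (-((l 0 + 1/2 - (m:ℚ)) • eps m 0))) * h1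
  trans ((ee m (l 0 • eps m 0) - ee m ((2*(m:ℚ) - 1 - l 0) • eps m 0)) *
      ee m (-(rhooB m)) * (QQ m * S)) / (U2 m * DenD m)
  · field_simp
  · rw [div_mul_eq_mul_div, div_eq_div_iff hud hGud]
    linear_combination (QQ m * S * (U2 m * DenD m)) * key
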